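/- Let n, m ≥ 2, let Z = M_{n,m}(ℂ) be the JC*-triple of complex n×m matrices with triple product {a,b,c} = (1/2)(a b* c + c b* a), and let (T, ρ) be a universal enveloping TRO of Z. Then the complex dimension of T is at most 2nm. -/

import Mathlib

noncomputable section

open Matrix

/-- A bundled complex Hilbert space. -/
structure HilbertC : Type 1 where
  carrier : Type
  [nacg : NormedAddCommGroup carrier]
  [ips : InnerProductSpace ℂ carrier]
  [cs : CompleteSpace carrier]

attribute [instance] HilbertC.nacg HilbertC.ips HilbertC.cs

/-- The algebra `B(H)` of bounded operators on a complex Hilbert space `H`. -/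
abbrev BH (H : HilbertC) := H.carrier →L[ℂ] H.carrier

/-- The Jordan triple product `{x,y,z} = (1/2)(x y* z + z y* x)`. -/
def jtp {A : Type*} [NonUnitalRing A] [StarRing A] [Module ℂ A] (x y z : A) : A :=
  (2⁻¹ : ℂ) • (x * star y * z + z * star y * x)

/-- `Z` is a JC*-triple: a closed complex subspace of `B(H)` closed under the
Jordan triple product. -/
def IsJCTriple {H : HilbertC} (Z : Submodule ℂ (BH H)) : Prop :=
  IsClosed (Z : Set (BH H)) ∧ ∀ x ∈ Z, ∀ y ∈ Z, ∀ z ∈ Z, jtp x y z ∈ Z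

/-- `T` is a TRO: a closed complex subspace of `B(H)` with `x y* z ∈ T`. -/
def IsTROsub {H : HilbertC} (T : Submodule ℂ (BH H)) : Prop :=
  IsClosed (T : Set (BH H)) ∧ ∀ x ∈ T, ∀ y ∈ T, ∀ z ∈ T, x * star y * z ∈ T

/-- The smallest closed complex subspace of `B(H)` containing `S` and closed under
the ternary product `(x,y,z) ↦ x y* z`. -/
def troClosure {H : HilbertC} (S : Set (BH H)) : Submodule ℂ (BH H) :=
  sInf {W : Submodule ℂ (BH H) | IsClosed (W : Set (BH H)) ∧ S ⊆ W ∧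
    ∀ x ∈ W, ∀ y ∈ W, ∀ z ∈ W, x * star y * z ∈ W}

/-- A triple homomorphism from a subspace `Z ⊆ B(H)` into `B(K)`. -/
def IsTripleHomB {H K : HilbertC} (Z : Submodule ℂ (BH H)) (φ : ↥Z →L[ℂ] BH K) : Prop :=
  ∀ x y z w : ↥Z, (w : BH H) = jtp (x : BH H) (y : BH H) (z : BH H) →
    φ w = jtp (φ x) (φ y) (φ z)

/-- A triple homomorphism from a subspace `Z ⊆ B(H)` into a subspace `U ⊆ B(K)`. -/
def IsTripleHomInto {H K : HilbertC} (Z : Submodule ℂ (BH H)) (U : Submodule ℂ (BH K))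
    (α : ↥Z →L[ℂ] ↥U) : Prop :=
  ∀ x y z w : ↥Z, (w : BH H) = jtp (x : BH H) (y : BH H) (z : BH H) →
    ((α w : BH K)) = jtp ((α x : BH K)) ((α y : BH K)) ((α z : BH K))

/-- A TRO-homomorphism between subspaces of operator algebras. -/
def IsTROHom {H K : HilbertC} (T : Submodule ℂ (BH H)) (U : Submodule ℂ (BH K))
    (β : ↥T →L[ℂ] ↥U) : Prop :=
  ∀ x y z w : ↥T, (w : BH H) = (x : BH H) * star (y : BH H) * (z : BH H) →
    ((β w : BH K)) = (β x : BH K) * star ((β y : BH K)) * ((β z : BH K))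

/-- `(T, ρ)` is a universal enveloping TRO of `Z`. -/
def IsUnivTRO {H Hh : HilbertC} (Z : Submodule ℂ (BH H)) (T : Submodule ℂ (BH Hh))
    (ρ : ↥Z →L[ℂ] ↥T) : Prop :=
  IsTROsub T ∧ IsTripleHomInto Z T ρ ∧
  troClosure (Set.range fun z : ↥Z => (ρ z : BH Hh)) = T ∧
  ∀ (K : HilbertC) (U : Submodule ℂ (BH K)), IsTROsub U →
    ∀ α : ↥Z →L[ℂ] ↥U, IsTripleHomInto Z U α →
      ∃ β : ↥T →L[ℂ] ↥U, IsTROHom T U β ∧ ∀ z, β (ρ z) = α z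

/-- The Jordan triple product on rectangular matrices. -/
def jtpM {n m : ℕ} (a b c : Matrix (Fin n) (Fin m) ℂ) : Matrix (Fin n) (Fin m) ℂ :=
  (2⁻¹ : ℂ) • (a * bᴴ * c + c * bᴴ * a)

/-- A triple homomorphism from the JC*-triple `M_{n,m}(ℂ)` into a subspace `U ⊆ B(K)`. -/
def IsTripleHomMat {n m : ℕ} {K : HilbertC} (U : Submodule ℂ (BH K))
    (α : Matrix (Fin n) (Fin m) ℂ →L[ℂ] ↥U) : Prop :=
  ∀ a b c, ((α (jtpM a b c) : BH K)) = jtp ((α a : BH K)) ((α b : BH K)) ((α c : BH K))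

/-- `(T, ρ)` is a universal enveloping TRO of the JC*-triple `M_{n,m}(ℂ)`. -/
def IsUnivTROMat {n m : ℕ} {Hh : HilbertC} (T : Submodule ℂ (BH Hh))
    (ρ : Matrix (Fin n) (Fin m) ℂ →L[ℂ] ↥T) : Prop :=
  IsTROsub T ∧ IsTripleHomMat T ρ ∧
  troClosure (Set.range fun a => (ρ a : BH Hh)) = T ∧
  ∀ (K : HilbertC) (U : Submodule ℂ (BH K)), IsTROsub U →
    ∀ α : Matrix (Fin n) (Fin m) ℂ →L[ℂ] ↥U, IsTripleHomMat U α →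
      ∃ β : ↥T →L[ℂ] ↥U, IsTROHom T U β ∧ ∀ a, β (ρ a) = α a


namespace Stmt15Aux

variable {H : HilbertC}

/-- The fundamental matrix-unit relation in `B(H)`. -/
def TRel {N M : ℕ} (V : Fin N → Fin M → BH H) : Prop :=
  ∀ (i k p : Fin N) (j l q : Fin M),
    V i j * star (V k l) * V p q + V p q * star (V k l) * V i j =
      (if j = l ∧ k = p then V i q else 0) + (if l = q ∧ k = i then V p j else 0)

lemma cancel_two {x y : BH H} (h : x + x = y + y) : x = y := by
  have h2 : (2 : ℂ) • x = (2 : ℂ) • y := by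
    rw [two_smul, two_smul]; exact h
  exact smul_right_injective _ (by norm_num : (2:ℂ) ≠ 0) h2

lemma cancel_self {x : BH H} (h : x + x = 0) : x = 0 := by
  have := cancel_two (y := (0 : BH H)) (by simpa using h)
  simpa using this

lemma m3t {a b c d t : BH H} (h : a * b * c = d) : a * (b * (c * t)) = d * t := by
  rw [← mul_assoc, ← mul_assoc, h]

lemma m2t {a b t : BH H} (h : a * b = 0) : a * (b * t) = 0 := by
  rw [← mul_assoc, h, zero_mul]

section Generic

variable {N M : ℕ} {V : Fin N → Fin M → BH H}

/-- transpose of a rectangular family -/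
def tr (V : Fin N → Fin M → BH H) : Fin M → Fin N → BH H := fun j i => V i j

lemma trel_tr (hV : TRel V) : TRel (tr V) := by
  intro j l q i k p
  have h := hV i k p j l q
  simp only [tr]
  calc V i j * star (V k l) * V p q + V p q * star (V k l) * V i j
      = (if j = l ∧ k = p then V i q else 0) + (if l = q ∧ k = i then V p j else 0) := h
    _ = (if l = q ∧ k = i then V p j else 0) + (if j = l ∧ k = p then V i q else 0) := by
        rw [add_comm]
    _ = (if i = k ∧ l = q then V p j else 0) + (if k = p ∧ l = j then V i q else 0) := by
        congr 1
        · congr 1; simp [and_comm, eq_comm]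
        · congr 1; simp [and_comm, eq_comm]

/-- partial isometry property -/
lemma pi3 (hV : TRel V) (i : Fin N) (j : Fin M) :
    V i j * star (V i j) * V i j = V i j := by
  have h := hV i i i j j j
  simp only [if_pos (⟨rfl, rfl⟩ : j = j ∧ i = i)] at h
  exact cancel_two h

lemma proj_split {p q w : BH H} (hp : p * p = p) (hq : q * q = q)
    (h : p * w + w * q = 0) : p * w = 0 ∧ w * q = 0 := by
  have h1 : p * w = -(w * q) := eq_neg_of_add_eq_zero_left h
  have h2 : p * w = w * q := by
    calc p * w = p * (p * w) := by rw [← mul_assoc, hp]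
      _ = p * (-(w * q)) := by rw [h1]
      _ = -(p * (w * q)) := by rw [mul_neg]
      _ = -(p * w * q) := by rw [mul_assoc]
      _ = -(-(w * q) * q) := by rw [h1]
      _ = w * q * q := by rw [neg_mul, neg_neg]
      _ = w * q := by rw [mul_assoc, hq]
  have hz : w * q = 0 := by
    have : w * q + w * q = 0 := by nth_rewrite 1 [← h2]; rw [h1, neg_add_cancel]
    exact cancel_self this
  exact ⟨by rw [h2, hz], hz⟩

/-- total orthogonality for diagonal pairs -/
lemma orth (hV : TRel V) {i k : Fin N} {j l : Fin M} (hik : i ≠ k) (hjl : j ≠ l) :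
    V i j * star (V k l) = 0 ∧ star (V k l) * V i j = 0 ∧
    V k l * star (V i j) = 0 ∧ star (V i j) * V k l = 0 := by
  set v := V i j with hv
  set w := V k l with hw
  have hpp : v * star v * (v * star v) = v * star v := by
    rw [← mul_assoc, pi3 hV]
  have hqq : star v * v * (star v * v) = star v * v := by
    rw [mul_assoc, ← mul_assoc v (star v) v, pi3 hV]
  have r1 : (v * star v) * w + w * (star v * v) = 0 := by
    have h := hV i i k j j l
    rw [if_neg (fun hc => hik hc.2), if_neg (fun hc => hjl hc.1)] at h
    rw [mul_assoc w (star v) v] at h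
    simpa using h
  obtain ⟨pw0, wq0⟩ := proj_split hpp hqq r1
  have hpp' : w * star w * (w * star w) = w * star w := by
    rw [← mul_assoc, pi3 hV]
  have hqq' : star w * w * (star w * w) = star w * w := by
    rw [mul_assoc, ← mul_assoc w (star w) w, pi3 hV]
  have r2 : (w * star w) * v + v * (star w * w) = 0 := by
    have h := hV k k i l l j
    rw [if_neg (fun hc => hik hc.2.symm), if_neg (fun hc => hjl hc.1.symm)] at h
    rw [mul_assoc v (star w) w] at h
    simpa using h
  obtain ⟨pw0', wq0'⟩ := proj_split hpp' hqq' r2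
  have o1 : v * star w = 0 := by
    have hx : (v * star w) * star (v * star w) = 0 := by
      rw [star_mul_star, mul_assoc v (star w) (w * star v),
        ← mul_assoc (star w) w (star v), ← mul_assoc v (star w * w) (star v),
        wq0', zero_mul]
    exact (CStarRing.mul_star_self_eq_zero_iff _).mp hx
  have o2 : star w * v = 0 := by
    have hx : (star w * v) * star (star w * v) = 0 := by
      rw [star_star_mul, mul_assoc (star w) v (star v * w),
        ← mul_assoc v (star v) w, pw0, mul_zero]
    exact (CStarRing.mul_star_self_eq_zero_iff _).mp hx
  have o3 : w * star v = 0 := by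
    have := congrArg star o1
    rwa [star_mul_star, star_zero] at this
  have o4 : star v * w = 0 := by
    have := congrArg star o2
    rwa [star_star_mul, star_zero] at this
  exact ⟨o1, o2, o3, o4⟩

/-- The key chain identity: for a 2x2 grid square, the "left part" of `V i j`
has several equal monomial representations. -/
lemma keyA (hV : TRel V) {i k : Fin N} {j l : Fin M} (hk : k ≠ i) (hl : l ≠ j) :
    V i j * star (V k j) * V k j = V i l * star (V k l) * V k j ∧
    V i l * star (V k l) * V k j = V i l * star (V i l) * V i j := by
  obtain ⟨ovx1, ovx2, ovx3, ovx4⟩ := orth hV (Ne.symm hk) (Ne.symm hl)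
  set v := V i j with hv
  set w := V k j with hw
  set x := V k l with hx
  set y := V i l with hy
  -- ovx1 : v * star x = 0, ovx2 : star x * v = 0, ovx3 : x * star v = 0, ovx4 : star v * x = 0
  have Ly : v * star w * x + x * star w * v = y := by
    have h := hV i k k j j l
    rw [if_pos ⟨rfl, rfl⟩, if_neg (fun hc => hl hc.1.symm)] at h
    simpa using h
  have Lw : v * star y * x + x * star y * v = w := by
    have h := hV i i k j l l
    rw [if_neg (fun hc => hl hc.1.symm), if_pos ⟨rfl, rfl⟩] at h
    simpa using h
  have s1 : v * star v * y = v * star w * x := by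
    conv_lhs => rw [← Ly]
    simp only [mul_add, mul_assoc]
    rw [m3t (pi3 hV i j), m2t ovx4]
    simp only [mul_zero, add_zero, mul_assoc]
    rfl
  have a1 : y * star x * w = v * star w * (x * star x * w) := by
    conv_lhs => rw [← Ly]
    simp only [add_mul, mul_assoc]
    rw [m2t ovx1]
    simp only [mul_zero, add_zero, mul_assoc]
  have a2 : v * star w * w = v * star w * (x * star x * w) := by
    have hsw : star w = star x * (y * star v) + star v * (y * star x) := by
      conv_lhs => rw [← Lw]
      simp only [star_add, StarMul.star_mul, star_star, mul_assoc]
    conv_lhs => rw [hsw]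
    simp only [mul_add, add_mul, mul_assoc]
    rw [m2t ovx1, m3t s1]
    simp only [zero_add, mul_assoc]
  have a4 : y * star x * w = y * star x * (x * star y * v) := by
    conv_lhs => rw [← Lw]
    simp only [mul_add, mul_assoc]
    rw [m2t ovx2]
    simp only [mul_zero, zero_add, mul_assoc]
  have pit : v * (star v * v) = v := by rw [← mul_assoc]; exact pi3 hV i j
  have a5 : y * star x * w * (star v * v) = y * star x * w := by
    conv_lhs => rw [a4]
    conv_rhs => rw [a4]
    simp only [mul_assoc]
    rw [pit]
  have a6 : y * star y * v = y * star x * w * (star v * v) := by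
    have hsy : star y = star x * (w * star v) + star v * (w * star x) := by
      conv_lhs => rw [← Ly]
      simp only [star_add, StarMul.star_mul, star_star, mul_assoc]
    conv_lhs => rw [hsy]
    simp only [mul_add, add_mul, mul_assoc]
    rw [ovx2]
    simp only [mul_zero, add_zero, mul_assoc]
  exact ⟨a2.trans a1.symm, (a6.trans a5).symm⟩

/-- a canonical "other index" function -/
def alt {N : ℕ} (hN : 2 ≤ N) : Fin N → Fin N := fun i =>
  if i = (⟨0, by omega⟩ : Fin N) then ⟨1, by omega⟩ else ⟨0, by omega⟩

lemma alt_ne {N : ℕ} (hN : 2 ≤ N) (i : Fin N) : alt hN i ≠ i := by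
  unfold alt
  split_ifs with h
  · rw [h]; simp [Fin.ext_iff]
  · exact fun hc => h hc.symm

/-- the "left part" of `V i j` -/
def AA (hN : 2 ≤ N) (V : Fin N → Fin M → BH H) (i : Fin N) (j : Fin M) : BH H :=
  V i j * star (V (alt hN i) j) * V (alt hN i) j

lemma AQ (hN : 2 ≤ N) (hM : 2 ≤ M) (hV : TRel V) {i s : Fin N} (j : Fin M) (hs : s ≠ i) :
    V i j * star (V s j) * V s j = AA hN V i j := by
  have h1 := keyA hV hs (alt_ne hM j)
  have h2 := keyA hV (alt_ne hN i) (alt_ne hM j)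
  exact (h1.1.trans h1.2).trans (h2.1.trans h2.2).symm

lemma AP (hN : 2 ≤ N) (hV : TRel V) (i : Fin N) {t j : Fin M} (ht : t ≠ j) :
    V i t * star (V i t) * V i j = AA hN V i j := by
  have h := keyA hV (alt_ne hN i) ht
  exact (h.1.trans h.2).symm

lemma Amon (hN : 2 ≤ N) (hM : 2 ≤ M) (hV : TRel V) {i k : Fin N} {j l : Fin M}
    (hk : k ≠ i) (hl : l ≠ j) :
    V i l * star (V k l) * V k j = AA hN V i j := by
  have h := keyA hV hk hl
  exact h.1.symm.trans (AQ hN hM hV j hk)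

/-- the "right part" of `V i j` -/
def BB (hM : 2 ≤ M) (V : Fin N → Fin M → BH H) (i : Fin N) (j : Fin M) : BH H :=
  AA hM (tr V) j i

lemma BB_def (hM : 2 ≤ M) (V : Fin N → Fin M → BH H) (i : Fin N) (j : Fin M) :
    BB hM V i j = V i j * star (V i (alt hM j)) * V i (alt hM j) := rfl

lemma splitAB (hN : 2 ≤ N) (hM : 2 ≤ M) (hV : TRel V) (i : Fin N) (j : Fin M) :
    AA hN V i j + BB hM V i j = V i j := by
  have h := hV i i i (alt hM j) (alt hM j) j
  rw [if_pos ⟨rfl, rfl⟩, if_neg (fun hc => (alt_ne hM j) hc.1)] at h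
  rw [AP hN hV i (alt_ne hM j)] at h
  rw [BB_def]
  simpa using h

lemma M2 (hN : 2 ≤ N) (hM : 2 ≤ M) (hV : TRel V) {k i : Fin N} (hki : k ≠ i)
    (l j : Fin M) : star (AA hN V k l) * V i j = 0 := by
  by_cases hlj : l = j
  · subst hlj
    rw [← AP hN hV k (alt_ne hM l)]
    have o : star (V k (alt hM l)) * V i l = 0 :=
      (orth hV (Ne.symm hki) (Ne.symm (alt_ne hM l))).2.1
    simp only [StarMul.star_mul, star_star, mul_assoc]
    rw [o]
    simp only [mul_zero]
  · rw [← AQ hN hM hV l (alt_ne hN k)]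
    have o : star (V k l) * V i j = 0 :=
      (orth hV (Ne.symm hki) (fun hc => hlj hc.symm)).2.1
    simp only [StarMul.star_mul, star_star, mul_assoc]
    rw [o]
    simp only [mul_zero]

lemma M2' (hN : 2 ≤ N) (hM : 2 ≤ M) (hV : TRel V) (i : Fin N) {j l : Fin M}
    (hjl : j ≠ l) (k : Fin N) : V i j * star (AA hN V k l) = 0 := by
  by_cases hik : i = k
  · subst hik
    rw [← AQ hN hM hV l (alt_ne hN i)]
    have o : V i j * star (V (alt hN i) l) = 0 :=
      (orth hV (Ne.symm (alt_ne hN i)) hjl).1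
    simp only [StarMul.star_mul, star_star, mul_assoc]
    rw [m2t o]
  · rw [← AP hN hV k (alt_ne hM l)]
    have o : V i j * star (V k l) = 0 := (orth hV hik hjl).1
    simp only [StarMul.star_mul, star_star, mul_assoc]
    rw [m2t o]

lemma OA1 (hN : 2 ≤ N) (hM : 2 ≤ M) (hV : TRel V) (i : Fin N) {j l : Fin M}
    (hjl : j ≠ l) (k : Fin N) : AA hN V i j * star (AA hN V k l) = 0 := by
  have h1 : V k l * star (AA hN V i j) = 0 := M2' hN hM hV k (Ne.symm hjl) i
  have h2 : AA hN V i j * star (V k l) = 0 := by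
    have := congrArg star h1
    rwa [star_mul_star, star_zero] at this
  rw [← AP hN hV k (alt_ne hM l)]
  simp only [StarMul.star_mul, star_star, mul_assoc]
  rw [m2t h2]

lemma OA2 (hN : 2 ≤ N) (hM : 2 ≤ M) (hV : TRel V) {i k : Fin N} (hik : i ≠ k)
    (j l : Fin M) : star (AA hN V i j) * AA hN V k l = 0 := by
  have h2 : star (AA hN V i j) * V k (alt hM l) = 0 := M2 hN hM hV hik j (alt hM l)
  rw [← AP hN hV k (alt_ne hM l)]
  simp only [mul_assoc]
  rw [← mul_assoc (star (AA hN V i j)) (V k (alt hM l)), h2, zero_mul]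

lemma M1 (hN : 2 ≤ N) (hM : 2 ≤ M) (hV : TRel V) {l j : Fin M} (hlj : l ≠ j)
    (k i : Fin N) : star (BB hM V k l) * V i j = 0 :=
  M2 hM hN (trel_tr hV) hlj k i

lemma M1' (hN : 2 ≤ N) (hM : 2 ≤ M) (hV : TRel V) {i k : Fin N} (hik : i ≠ k)
    (j l : Fin M) : V i j * star (BB hM V k l) = 0 :=
  M2' hM hN (trel_tr hV) j hik l

lemma OB1 (hN : 2 ≤ N) (hM : 2 ≤ M) (hV : TRel V) {i k : Fin N} (hik : i ≠ k)
    (j l : Fin M) : BB hM V i j * star (BB hM V k l) = 0 :=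
  OA1 hM hN (trel_tr hV) j hik l

lemma OB2 (hN : 2 ≤ N) (hM : 2 ≤ M) (hV : TRel V) {j l : Fin M} (hjl : j ≠ l)
    (i k : Fin N) : star (BB hM V i j) * BB hM V k l = 0 :=
  OA2 hM hN (trel_tr hV) hjl i k

lemma Bmon (hN : 2 ≤ N) (hM : 2 ≤ M) (hV : TRel V) {i k : Fin N} {j l : Fin M}
    (hk : k ≠ i) (hl : l ≠ j) :
    V k j * star (V k l) * V i l = BB hM V i j :=
  Amon hM hN (trel_tr hV) hl hk

lemma BP (hN : 2 ≤ N) (hM : 2 ≤ M) (hV : TRel V) {k i : Fin N} (hk : k ≠ i) (j : Fin M) :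
    V k j * star (V k j) * V i j = BB hM V i j :=
  AP hM (trel_tr hV) j hk

lemma BQ (hN : 2 ≤ N) (hM : 2 ≤ M) (hV : TRel V) (i : Fin N) {t j : Fin M} (ht : t ≠ j) :
    V i j * star (V i t) * V i t = BB hM V i j :=
  AQ hM hN (trel_tr hV) i ht

lemma S1 (hN : 2 ≤ N) (hM : 2 ≤ M) (hV : TRel V) (i k : Fin N) (j l : Fin M) :
    AA hN V i j * star (BB hM V k l) = 0 := by
  by_cases hik : i = k
  · subst hik
    by_cases hjl : j = l
    · subst hjl
      rw [← Amon hN hM hV (alt_ne hN i) (alt_ne hM j),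
          ← Bmon hN hM hV (alt_ne hN i) (alt_ne hM j)]
      have o : V (alt hN i) j * star (V i (alt hM j)) = 0 :=
        (orth hV (alt_ne hN i) (fun hc => (alt_ne hM j) hc.symm)).1
      simp only [StarMul.star_mul, star_star, mul_assoc]
      rw [m2t o]
      simp only [mul_zero]
    · rw [← AQ hN hM hV j (alt_ne hN i), ← BP hN hM hV (alt_ne hN i) l]
      have o : V (alt hN i) j * star (V i l) = 0 :=
        (orth hV (alt_ne hN i) hjl).1
      simp only [StarMul.star_mul, star_star, mul_assoc]
      rw [m2t o]
      simp only [mul_zero]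
  · rw [← AP hN hV i (alt_ne hM j)]
    have h := M1' hN hM hV hik j l
    simp only [mul_assoc]
    rw [h]
    simp only [mul_zero]

lemma S2 (hN : 2 ≤ N) (hM : 2 ≤ M) (hV : TRel V) (k i : Fin N) (l j : Fin M) :
    star (BB hM V k l) * AA hN V i j = 0 := by
  by_cases hlj : l = j
  · subst hlj
    rw [← AP hN hV i (alt_ne hM l)]
    have h : star (BB hM V k l) * V i (alt hM l) = 0 :=
      M1 hN hM hV (fun hc => (alt_ne hM l) hc.symm) k i
    simp only [mul_assoc]
    rw [m2t h]
  · rw [← AQ hN hM hV j (alt_ne hN i)]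
    have h : star (BB hM V k l) * V i j = 0 := M1 hN hM hV hlj k i
    simp only [mul_assoc]
    rw [m2t h]

/-- The multiplication table for the `A`-family, given the separation lemmas
for a complementary family `B'`. -/
lemma TAgen (hN : 2 ≤ N) (hM : 2 ≤ M) (hV : TRel V) (B' : Fin N → Fin M → BH H)
    (hsplit : ∀ i j, AA hN V i j + B' i j = V i j)
    (hS1 : ∀ (i k : Fin N) (j l : Fin M), AA hN V i j * star (B' k l) = 0)
    (hS2 : ∀ (k i : Fin N) (l j : Fin M), star (B' k l) * AA hN V i j = 0)
    (hM1 : ∀ {l j : Fin M}, l ≠ j → ∀ k i : Fin N, star (B' k l) * V i j = 0)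
    (hM1' : ∀ {i k : Fin N}, i ≠ k → ∀ j l : Fin M, V i j * star (B' k l) = 0)
    (hBP : ∀ {k i : Fin N}, k ≠ i → ∀ j : Fin M, V k j * star (V k j) * V i j = B' i j)
    (hBmon : ∀ {k i : Fin N} {q j : Fin M}, k ≠ i → q ≠ j →
        V k q * star (V k j) * V i j = B' i q)
    (i k p : Fin N) (j l q : Fin M) :
    AA hN V i j * star (AA hN V k l) * AA hN V p q =
      if j = l ∧ k = p then AA hN V i q else 0 := by
  have hS2' : ∀ (a c : Fin N) (b d : Fin M), star (AA hN V a b) * B' c d = 0 := by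
    intro a c b d
    have h0 := congrArg star (hS2 c a d b)
    rwa [star_star_mul, star_zero] at h0
  have hB'sA : ∀ (a c : Fin N) (b d : Fin M), B' a b * star (AA hN V c d) = 0 := by
    intro a c b d
    have h0 := congrArg star (hS1 c a d b)
    rwa [star_mul_star, star_zero] at h0
  have hsV : ∀ (c : Fin N) (d : Fin M),
      star (V c d) = star (AA hN V c d) + star (B' c d) := by
    intro c d; rw [← star_add, hsplit]
  by_cases hjl : j = l
  · subst hjl
    by_cases hkp : k = p
    · subst hkp
      rw [if_pos ⟨rfl, rfl⟩]
      have r1 : AA hN V i j * star (AA hN V k j) = AA hN V i j * star (V k j) := by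
        rw [hsV k j, mul_add, hS1, add_zero]
      have kill1 : ∀ (e : Fin N) (f : Fin M),
          AA hN V i j * star (V k j) * B' e f = 0 := by
        intro e f
        rw [hsV k j, mul_add, add_mul, mul_assoc, hS2' k e j f, mul_zero,
          hS1 i k j j, zero_mul, add_zero]
      have last : AA hN V i j * star (AA hN V k j) * AA hN V k q
          = AA hN V i j * star (V k j) * V k q := by
        rw [r1]
        have h0 : AA hN V i j * star (V k j) * (AA hN V k q + B' k q)
            = AA hN V i j * star (V k j) * V k q := by rw [hsplit]
        rw [mul_add, kill1 k q, add_zero] at h0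
        exact h0
      rw [last]
      rcases eq_or_ne k i with hki | hki
      · subst hki
        -- now the row indices of all three factors coincide (named k)
        have front : AA hN V k j * star (V k j) * V k q
            = V k j * star (V k j) * V k q - B' k j * star (V k j) * V k q := by
          rw [eq_sub_iff_add_eq, ← add_mul, ← add_mul, hsplit]
        rcases eq_or_ne q j with hqj | hqj
        · subst hqj
          -- C4
          rw [← AP hN hV k (alt_ne hM q)]
          simp only [mul_assoc]
          rw [← mul_assoc (V k q) (star (V k q)) (V k q), pi3 hV k q]
        · -- C2
          rw [front]
          have h1 : V k j * star (V k j) * V k q = AA hN V k q :=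
            AP hN hV k (Ne.symm hqj)
          have h2 : B' k j * star (V k j) * V k q = 0 := by
            rw [hsV k j, mul_add, add_mul, hB'sA k k j j, zero_mul, mul_assoc,
              hM1 (Ne.symm hqj) k k, mul_zero, add_zero]
          rw [h1, h2, sub_zero]
      · -- k ≠ i
        have killB : B' i j * star (V k j) = 0 := by
          have h0 := congrArg star (hM1' hki j j)
          rwa [star_mul_star, star_zero] at h0
        have front : AA hN V i j * star (V k j) * V k q
            = V i j * star (V k j) * V k q - B' i j * star (V k j) * V k q := by
          rw [eq_sub_iff_add_eq, ← add_mul, ← add_mul, hsplit]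
        rw [front, killB, zero_mul, sub_zero]
        rcases eq_or_ne q j with hqj | hqj
        · subst hqj
          -- C3
          have hrel := hV i k k q q q
          rw [if_pos ⟨rfl, rfl⟩, if_neg (fun hc => hki hc.2)] at hrel
          rw [hBP hki q] at hrel
          have hX : V i q * star (V k q) * V k q = V i q - B' i q := by
            rw [eq_sub_iff_add_eq]; simpa using hrel
          rw [hX, ← hsplit i q, add_sub_cancel_right]
        · -- C1
          have hrel := hV i k k j j q
          rw [if_pos ⟨rfl, rfl⟩, if_neg (fun hc => hqj hc.1.symm)] at hrel
          rw [hBmon hki hqj] at hrel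
          have hX : V i j * star (V k j) * V k q = V i q - B' i q := by
            rw [eq_sub_iff_add_eq]; simpa using hrel
          rw [hX, ← hsplit i q, add_sub_cancel_right]
    · rw [if_neg (fun hc => hkp hc.2)]
      rw [mul_assoc, OA2 hN hM hV hkp j q, mul_zero]
  · rw [if_neg (fun hc => hjl hc.1)]
    rw [OA1 hN hM hV i hjl k, zero_mul]

lemma TA (hN : 2 ≤ N) (hM : 2 ≤ M) (hV : TRel V) (i k p : Fin N) (j l q : Fin M) :
    AA hN V i j * star (AA hN V k l) * AA hN V p q =
      if j = l ∧ k = p then AA hN V i q else 0 :=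
  TAgen hN hM hV (BB hM V) (splitAB hN hM hV) (S1 hN hM hV) (S2 hN hM hV)
    (fun hlj k i => M1 hN hM hV hlj k i) (fun hik j l => M1' hN hM hV hik j l)
    (fun hk j => BP hN hM hV hk j) (fun hk hq => Bmon hN hM hV hk (Ne.symm hq)) i k p j l q

lemma SAB (hN : 2 ≤ N) (hM : 2 ≤ M) (hV : TRel V) (a c : Fin N) (b d : Fin M) :
    star (AA hN V a b) * BB hM V c d = 0 := by
  have h0 := congrArg star (S2 hN hM hV c a d b)
  rwa [star_star_mul, star_zero] at h0

lemma BsA (hN : 2 ≤ N) (hM : 2 ≤ M) (hV : TRel V) (a c : Fin N) (b d : Fin M) :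
    BB hM V a b * star (AA hN V c d) = 0 := by
  have h0 := congrArg star (S1 hN hM hV c a d b)
  rwa [star_mul_star, star_zero] at h0

lemma TB (hN : 2 ≤ N) (hM : 2 ≤ M) (hV : TRel V) (i k p : Fin N) (j l q : Fin M) :
    BB hM V i j * star (BB hM V k l) * BB hM V p q =
      if i = k ∧ l = q then BB hM V p j else 0 := by
  exact TAgen hM hN (trel_tr hV) (fun (b : Fin M) (a : Fin N) => AA hN V a b)
    (fun b a => by rw [add_comm]; exact splitAB hN hM hV a b)
    (fun i' k' j' l' => by
      have h0 := congrArg star (S1 hN hM hV l' j' k' i')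
      rwa [star_mul_star, star_zero] at h0)
    (fun k' i' l' j' => by
      have h0 := congrArg star (S2 hN hM hV j' l' i' k')
      rwa [star_star_mul, star_zero] at h0)
    (fun hlj k' i' => M2 hN hM hV hlj k' i')
    (fun hik j' l' => M2' hN hM hV j' hik l')
    (fun hk j' => AP hN hV j' hk)
    (fun hk hq => Amon hN hM hV (Ne.symm hq) hk)
    j l q i k p

lemma span_ternary {S : Set (BH H)}
    (hS : ∀ x ∈ S, ∀ y ∈ S, ∀ z ∈ S, x * star y * z ∈ Submodule.span ℂ S) :
    ∀ x ∈ Submodule.span ℂ S, ∀ y ∈ Submodule.span ℂ S, ∀ z ∈ Submodule.span ℂ S,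
      x * star y * z ∈ Submodule.span ℂ S := by
  have h1 : ∀ x ∈ S, ∀ y ∈ S, ∀ z ∈ Submodule.span ℂ S,
      x * star y * z ∈ Submodule.span ℂ S := by
    intro x hx y hy z hz
    induction hz using Submodule.span_induction with
    | mem w hw => exact hS x hx y hy w hw
    | zero => rw [mul_zero]; exact zero_mem _
    | add a b _ _ iha ihb => rw [mul_add]; exact add_mem iha ihb
    | smul c a _ iha => rw [mul_smul_comm]; exact Submodule.smul_mem _ _ iha
  have h2 : ∀ x ∈ S, ∀ y ∈ Submodule.span ℂ S, ∀ z ∈ Submodule.span ℂ S,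
      x * star y * z ∈ Submodule.span ℂ S := by
    intro x hx y hy z hz
    induction hy using Submodule.span_induction with
    | mem w hw => exact h1 x hx w hw z hz
    | zero => rw [star_zero, mul_zero, zero_mul]; exact zero_mem _
    | add a b _ _ iha ihb => rw [star_add, mul_add, add_mul]; exact add_mem iha ihb
    | smul c a _ iha =>
        rw [star_smul, mul_smul_comm, smul_mul_assoc]
        exact Submodule.smul_mem _ _ iha
  intro x hx y hy z hz
  induction hx using Submodule.span_induction with
  | mem w hw => exact h2 w hw y hy z hz
  | zero => rw [zero_mul, zero_mul]; exact zero_mem _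
  | add a b _ _ iha ihb => rw [add_mul, add_mul]; exact add_mem iha ihb
  | smul c a _ iha => rw [smul_mul_assoc, smul_mul_assoc]; exact Submodule.smul_mem _ _ iha

end Generic

section Extract

variable {n m : ℕ}

lemma conjT_std (k : Fin n) (l : Fin m) :
    (Matrix.single k l (1:ℂ))ᴴ = Matrix.single l k (1:ℂ) := by
  ext a b
  simp [Matrix.conjTranspose_apply, Matrix.single, Matrix.of_apply, and_comm]

lemma std_mul {P Q R : ℕ} (i : Fin P) (j k : Fin Q) (l : Fin R) :
    Matrix.single i j (1:ℂ) * Matrix.single k l (1:ℂ) =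
      if j = k then Matrix.single i l (1:ℂ) else 0 := by
  ext a b
  rw [Matrix.mul_apply]
  rw [Finset.sum_eq_single j]
  · by_cases hjk : j = k
    · subst hjk
      rw [if_pos rfl]
      by_cases hia : i = a <;> by_cases hlb : l = b <;>
        simp [Matrix.single, Matrix.of_apply, hia, hlb]
    · rw [if_neg hjk]
      have : ¬(k = j ∧ l = b) := fun hc => hjk hc.1.symm
      simp [Matrix.single, Matrix.of_apply, this]
  · intro x _ hxj
    have : ¬(i = a ∧ j = x) := fun hc => hxj hc.2.symm
    simp [Matrix.single, Matrix.of_apply, this]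
  · intro hj; exact absurd (Finset.mem_univ j) hj

lemma mulE1 (i k p : Fin n) (j l q : Fin m) :
    Matrix.single i j (1:ℂ) * (Matrix.single k l (1:ℂ))ᴴ * Matrix.single p q (1:ℂ) =
      if j = l ∧ k = p then Matrix.single i q (1:ℂ) else 0 := by
  rw [conjT_std, std_mul]
  by_cases h1 : j = l
  · rw [if_pos h1, std_mul]
    by_cases h2 : k = p
    · rw [if_pos h2, if_pos ⟨h1, h2⟩]
    · rw [if_neg h2, if_neg (fun hc => h2 hc.2)]
  · rw [if_neg h1, Matrix.zero_mul, if_neg (fun hc => h1 hc.1)]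

lemma mulE2 (p i k : Fin n) (q l j : Fin m) :
    Matrix.single p q (1:ℂ) * (Matrix.single k l (1:ℂ))ᴴ * Matrix.single i j (1:ℂ) =
      if l = q ∧ k = i then Matrix.single p j (1:ℂ) else 0 := by
  rw [conjT_std, std_mul]
  by_cases h1 : l = q
  · rw [if_pos h1.symm, std_mul]
    by_cases h2 : k = i
    · rw [if_pos h2, if_pos ⟨h1, h2⟩]
    · rw [if_neg h2, if_neg (fun hc => h2 hc.2)]
  · rw [if_neg (fun hc => h1 hc.symm), Matrix.zero_mul, if_neg (fun hc => h1 hc.1)]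

end Extract
end Stmt15Aux

theorem stmt_15' (n m : ℕ) (hn : 2 ≤ n) (hm : 2 ≤ m) (Hh : HilbertC)
    (T : Submodule ℂ (BH Hh)) (ρ : Matrix (Fin n) (Fin m) ℂ →L[ℂ] ↥T)
    (hUniv : IsUnivTROMat T ρ) :
    Module.rank ℂ ↥T ≤ ((2 * n * m : ℕ) : Cardinal) := by
  classical
  obtain ⟨hTRO, hHom, hGen, -⟩ := hUniv
  set V : Fin n → Fin m → BH Hh :=
    fun i j => ((ρ (Matrix.single i j (1:ℂ)) : ↥T) : BH Hh) with hV0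
  have hV : Stmt15Aux.TRel V := by
    intro i k p j l q
    have h := hHom (Matrix.single i j (1:ℂ)) (Matrix.single k l (1:ℂ))
      (Matrix.single p q (1:ℂ))
    have hj : jtpM (Matrix.single i j (1:ℂ)) (Matrix.single k l (1:ℂ))
        (Matrix.single p q (1:ℂ))
        = (2⁻¹ : ℂ) • ((if j = l ∧ k = p then Matrix.single i q (1:ℂ) else 0)
            + (if l = q ∧ k = i then Matrix.single p j (1:ℂ) else 0)) := by
      unfold jtpM
      rw [Stmt15Aux.mulE1, Stmt15Aux.mulE2]
    rw [hj, _root_.map_smul, map_add, apply_ite ρ, apply_ite ρ, map_zero] at h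
    rw [Submodule.coe_smul, Submodule.coe_add] at h
    rw [apply_ite (fun t : ↥T => (t : BH Hh)), apply_ite (fun t : ↥T => (t : BH Hh))] at h
    simp only [Submodule.coe_zero] at h
    simp only [jtp] at h
    have h2 := smul_right_injective (BH Hh) (by norm_num : (2⁻¹ : ℂ) ≠ 0) h
    exact h2.symm
  set G : (Fin n × Fin m) ⊕ (Fin n × Fin m) → BH Hh :=
    Sum.elim (fun p => Stmt15Aux.AA hn V p.1 p.2) (fun p => Stmt15Aux.BB hm V p.1 p.2)
    with hG0
  set W : Submodule ℂ (BH Hh) := Submodule.span ℂ (Set.range G) with hW0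
  have hVin : ∀ i j, V i j ∈ W := by
    intro i j
    rw [← Stmt15Aux.splitAB hn hm hV i j]
    exact add_mem (Submodule.subset_span ⟨Sum.inl (i, j), rfl⟩)
      (Submodule.subset_span ⟨Sum.inr (i, j), rfl⟩)
  have hWfd : FiniteDimensional ℂ ↥W := FiniteDimensional.span_of_finite ℂ (Set.finite_range G)
  have hWclosed : IsClosed (W : Set (BH Hh)) := Submodule.closed_of_finiteDimensional W
  have hWsub : (Set.range fun a => ((ρ a : ↥T) : BH Hh)) ⊆ ↑W := by
    rintro x ⟨a, ha0⟩
    have ha := Matrix.matrix_eq_sum_single a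
    have hexp : ((ρ a : ↥T) : BH Hh) = ∑ i : Fin n, ∑ j : Fin m, a i j • V i j := by
      conv_lhs => rw [ha]
      rw [map_sum, AddSubmonoidClass.coe_finset_sum]
      refine Finset.sum_congr rfl fun i _ => ?_
      rw [map_sum, AddSubmonoidClass.coe_finset_sum]
      refine Finset.sum_congr rfl fun j _ => ?_
      rw [show Matrix.single i j (a i j) = a i j • Matrix.single i j (1:ℂ) from by
        rw [Matrix.smul_single, smul_eq_mul, mul_one]]
      rw [_root_.map_smul, Submodule.coe_smul]
    have hmem : ((ρ a : ↥T) : BH Hh) ∈ W := by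
      rw [hexp]
      exact Submodule.sum_mem _ fun i _ => Submodule.sum_mem _ fun j _ =>
        Submodule.smul_mem _ _ (hVin i j)
    rw [← ha0]
    exact hmem
  have hbase : ∀ x ∈ Set.range G, ∀ y ∈ Set.range G, ∀ z ∈ Set.range G,
      x * star y * z ∈ Submodule.span ℂ (Set.range G) := by
    rintro _ ⟨gx, rfl⟩ _ ⟨gy, rfl⟩ _ ⟨gz, rfl⟩
    rcases gx with ⟨i, j⟩ | ⟨i, j⟩ <;> rcases gy with ⟨k, l⟩ | ⟨k, l⟩ <;>
      rcases gz with ⟨p, q⟩ | ⟨p, q⟩ <;>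
      simp only [hG0, Sum.elim_inl, Sum.elim_inr]
    · rw [Stmt15Aux.TA hn hm hV]
      split_ifs
      · exact Submodule.subset_span ⟨Sum.inl (i, q), rfl⟩
      · exact zero_mem _
    · rw [mul_assoc, Stmt15Aux.SAB hn hm hV, mul_zero]; exact zero_mem _
    · rw [Stmt15Aux.S1 hn hm hV, zero_mul]; exact zero_mem _
    · rw [Stmt15Aux.S1 hn hm hV, zero_mul]; exact zero_mem _
    · rw [Stmt15Aux.BsA hn hm hV, zero_mul]; exact zero_mem _
    · rw [Stmt15Aux.BsA hn hm hV, zero_mul]; exact zero_mem _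
    · rw [mul_assoc, Stmt15Aux.S2 hn hm hV, mul_zero]; exact zero_mem _
    · rw [Stmt15Aux.TB hn hm hV]
      split_ifs
      · exact Submodule.subset_span ⟨Sum.inr (p, j), rfl⟩
      · exact zero_mem _
  have hWtern : ∀ x ∈ W, ∀ y ∈ W, ∀ z ∈ W, x * star y * z ∈ W :=
    Stmt15Aux.span_ternary hbase
  have hTW : T ≤ W := by
    rw [← hGen]
    exact sInf_le ⟨hWclosed, hWsub, hWtern⟩
  refine le_trans (Submodule.rank_mono hTW) ?_
  refine le_trans (rank_span_le _) ?_
  refine le_trans Cardinal.mk_range_le ?_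
  rw [Cardinal.mk_fintype]
  apply Nat.cast_le.mpr
  simp [Fintype.card_sum, Fintype.card_prod]
  ring_nf
  omega

/-- for `n, m ≥ 2`, the universal enveloping TRO of `M_{n,m}(ℂ)` has
dimension at most `2nm`. -/
theorem stmt_15 (n m : ℕ) (hn : 2 ≤ n) (hm : 2 ≤ m) (Hh : HilbertC)
    (T : Submodule ℂ (BH Hh)) (ρ : Matrix (Fin n) (Fin m) ℂ →L[ℂ] ↥T)
    (hUniv : IsUnivTROMat T ρ) :
    Module.rank ℂ ↥T ≤ ((2 * n * m : ℕ) : Cardinal) := by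
  exact stmt_15' n m hn hm Hh T ρ hUniv
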